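/- Let S be a finite semigroup with a rank labelling ρ : S → ℕ, and let k be the maximum value attained by ρ on S. Suppose α, β, γ ∈ S satisfy ρ(α) = ρ(β) = ρ(γ) = k, ρ(α·β) = r with r < k, α·β·γ = β·γ, and ρ(β·γ) = r. Let X = {s ∈ S : ρ(s) ≥ r + 1} and R = {(x_s·x_t, x_{st}) : ρ(s) ≥ r+1, ρ(t) ≥ r+1, ρ(s·t) ≥ r+1}. Then the pair (x_α·x_β·x_γ, x_β·x_γ) does NOT lie in the congruence on FreeSemigroup X generated by R; that is, x_α x_β x_γ = x_β x_γ is not a consequence of R. -/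

import Mathlib

/-- The principal two-sided ideal generated by `y`. -/
def Jset {S : Type*} [Semigroup S] (y : S) : Set S :=
  {y} ∪ {z | ∃ s, z = s * y} ∪ {z | ∃ s, z = y * s} ∪ {z | ∃ s t, z = s * y * t}

/-- `ρ` is a rank labelling of `S`: it reflects the inclusion order of principal ideals;
in particular the `J`-classes of `S` form a chain. -/
def IsRankLabelling {S : Type*} [Semigroup S] (ρ : S → ℕ) : Prop :=
  ∀ x y : S, ρ x ≤ ρ y ↔ Jset x ⊆ Jset y

/-- The relations of the Cayley table presentation of `S` restricted to elements
of rank at least `i`. -/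
def rankCayleyRel {S : Type*} [Semigroup S] (ρ : S → ℕ) (i : ℕ) :
    FreeSemigroup {s : S // i ≤ ρ s} → FreeSemigroup {s : S // i ≤ ρ s} → Prop := fun u v =>
  ∃ (s t : S) (hs : i ≤ ρ s) (ht : i ≤ ρ t) (hst : i ≤ ρ (s * t)),
    u = FreeSemigroup.of ⟨s, hs⟩ * FreeSemigroup.of ⟨t, ht⟩ ∧
    v = FreeSemigroup.of ⟨s * t, hst⟩

namespace Stmt3Aux

/-! ### Generic facts -/

theorem exists_idem_pow {M : Type*} [Monoid M] [Finite M] (m : M) :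
    ∃ n, 0 < n ∧ m ^ n * m ^ n = m ^ n := by
  obtain ⟨i, j, hij, h⟩ := Finite.exists_ne_map_eq_of_infinite (fun n : ℕ => m ^ n)
  have aux : ∀ i j : ℕ, i < j → m ^ i = m ^ j → ∃ n, 0 < n ∧ m ^ n * m ^ n = m ^ n := by
    intro i j hlt h
    set p := j - i with hp
    have hp0 : 0 < p := by omega
    have key : ∀ e, i ≤ e → m ^ e = m ^ (e + p) := by
      intro e he
      have h1 : m ^ e = m ^ (e - i) * m ^ i := by
        rw [← pow_add]; congr 1; omega
      rw [h1, h, ← pow_add]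
      congr 1; omega
    have key2 : ∀ c e, i ≤ e → m ^ e = m ^ (e + c * p) := by
      intro c
      induction c with
      | zero => intro e _; simp
      | succ c ih =>
        intro e he
        rw [ih e he, key (e + c * p) (by omega)]
        congr 1; ring
    refine ⟨(i + 1) * p, by positivity, ?_⟩
    have hin : i ≤ (i + 1) * p := by nlinarith
    rw [← pow_add]
    have := key2 (i + 1) ((i + 1) * p) hin
    rw [← this]
  rcases lt_or_gt_of_ne hij with hlt | hlt
  · exact aux i j hlt h
  · exact aux j i hlt h.symm

theorem idem_pow {M : Type*} [Monoid M] {e : M} (he : e * e = e) :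
    ∀ {c : ℕ}, 0 < c → e ^ c = e := by
  intro c hc
  induction c with
  | zero => omega
  | succ c ih =>
    rcases Nat.eq_zero_or_pos c with rfl | hc'
    · simp
    · rw [pow_succ, ih hc', he]

theorem sandwich {M : Type*} [Monoid M] [Finite M] {m P Q : M} (h : m = P * m * Q) :
    (∃ x, m = x * (P * m)) ∧ (∃ y, m = (m * Q) * y) := by
  have key : ∀ n, m = P ^ n * m * Q ^ n := by
    intro n
    induction n with
    | zero => simp
    | succ n ih =>
      calc m = P * m * Q := h
      _ = P * (P ^ n * m * Q ^ n) * Q := by rw [← ih]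
      _ = (P * P ^ n) * m * (Q ^ n * Q) := by simp only [mul_assoc]
      _ = P ^ (n + 1) * m * Q ^ (n + 1) := by rw [← pow_succ', ← pow_succ]
  obtain ⟨n₁, h₁, hP⟩ := exists_idem_pow P
  obtain ⟨n₂, h₂, hQ⟩ := exists_idem_pow Q
  have hn : 0 < n₁ * n₂ := Nat.mul_pos h₁ h₂
  have hPn : P ^ (n₁ * n₂) * P ^ (n₁ * n₂) = P ^ (n₁ * n₂) := by
    have h3 : (P ^ n₁) ^ n₂ = P ^ n₁ := idem_pow hP h₂
    rw [pow_mul, h3]; exact hP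
  have hQn : Q ^ (n₁ * n₂) * Q ^ (n₁ * n₂) = Q ^ (n₁ * n₂) := by
    have h3 : (Q ^ n₂) ^ n₁ = Q ^ n₂ := idem_pow hQ h₁
    rw [Nat.mul_comm, pow_mul, h3]; exact hQ
  set n := n₁ * n₂ with hndef
  have h' : m = P ^ n * m * Q ^ n := key n
  have hmQ : m * Q ^ n = m := by
    calc m * Q ^ n = (P ^ n * m * Q ^ n) * Q ^ n := by rw [← h']
    _ = P ^ n * m * (Q ^ n * Q ^ n) := by rw [mul_assoc]
    _ = P ^ n * m * Q ^ n := by rw [hQn]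
    _ = m := h'.symm
  have hPm : P ^ n * m = m := by
    calc P ^ n * m = P ^ n * (P ^ n * m * Q ^ n) := by rw [← h']
    _ = (P ^ n * P ^ n) * m * Q ^ n := by simp only [mul_assoc]
    _ = P ^ n * m * Q ^ n := by rw [hPn]
    _ = m := h'.symm
  constructor
  · refine ⟨P ^ (n - 1), ?_⟩
    have : P ^ n = P ^ (n - 1) * P := by
      rw [← pow_succ]; congr 1; omega
    conv_lhs => rw [← hPm, this]
    rw [mul_assoc]
  · refine ⟨Q ^ (n - 1), ?_⟩
    have : Q ^ n = Q * Q ^ (n - 1) := by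
      rw [← pow_succ']; congr 1; omega
    conv_lhs => rw [← hmQ, this]
    rw [mul_assoc]

/-! ### Rank facts -/

section Rank

variable {S : Type*} [Semigroup S]

theorem Jset_mul_left (x y : S) : Jset (x * y) ⊆ Jset x := by
  rintro z (((hz | ⟨s, rfl⟩) | ⟨s, rfl⟩) | ⟨s, t, rfl⟩)
  · rw [Set.mem_singleton_iff] at hz; subst hz
    exact Or.inl (Or.inr ⟨y, rfl⟩)
  · exact Or.inr ⟨s, y, (mul_assoc s x y).symm⟩
  · exact Or.inl (Or.inr ⟨y * s, mul_assoc x y s⟩)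
  · exact Or.inr ⟨s, y * t, by simp only [mul_assoc]⟩

theorem Jset_mul_right (x y : S) : Jset (x * y) ⊆ Jset y := by
  rintro z (((hz | ⟨s, rfl⟩) | ⟨s, rfl⟩) | ⟨s, t, rfl⟩)
  · rw [Set.mem_singleton_iff] at hz; subst hz
    exact Or.inl (Or.inl (Or.inr ⟨x, rfl⟩))
  · exact Or.inl (Or.inl (Or.inr ⟨s * x, (mul_assoc s x y).symm⟩))
  · exact Or.inr ⟨x, s, rfl⟩
  · exact Or.inr ⟨s * x, t, by simp only [mul_assoc]⟩

variable {ρ : S → ℕ}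

theorem rho_mul_le_left (hρ : IsRankLabelling ρ) (x y : S) : ρ (x * y) ≤ ρ x :=
  (hρ _ _).mpr (Jset_mul_left x y)

theorem rho_mul_le_right (hρ : IsRankLabelling ρ) (x y : S) : ρ (x * y) ≤ ρ y :=
  (hρ _ _).mpr (Jset_mul_right x y)

open scoped Classical in
noncomputable def rhoBar (ρ : S → ℕ) (k : ℕ) (m : WithOne S) : ℕ :=
  if h : m = 1 then k + 1 else ρ (WithOne.unone h)

theorem rhoBar_coe (ρ : S → ℕ) (k : ℕ) (s : S) : rhoBar ρ k (↑s) = ρ s := by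
  rw [rhoBar, dif_neg WithOne.coe_ne_one, WithOne.unone_coe]

theorem rhoBar_one (ρ : S → ℕ) (k : ℕ) : rhoBar ρ k 1 = k + 1 := by
  rw [rhoBar, dif_pos rfl]

theorem rhoBar_le_top {ρ : S → ℕ} {k : ℕ} (hk : ∀ s : S, ρ s ≤ k) (m : WithOne S) :
    rhoBar ρ k m ≤ k + 1 := by
  rcases eq_or_ne m 1 with rfl | h
  · rw [rhoBar_one]
  · obtain ⟨s, rfl⟩ := WithOne.ne_one_iff_exists.mp h
    rw [rhoBar_coe]; exact (hk s).trans (Nat.le_succ k)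

theorem rhoBar_mul_le_left {ρ : S → ℕ} {k : ℕ} (hρ : IsRankLabelling ρ)
    (hk : ∀ s : S, ρ s ≤ k) (x y : WithOne S) : rhoBar ρ k (x * y) ≤ rhoBar ρ k x := by
  rcases eq_or_ne x 1 with rfl | hx
  · rw [one_mul, rhoBar_one]; exact rhoBar_le_top hk y
  · obtain ⟨s, rfl⟩ := WithOne.ne_one_iff_exists.mp hx
    rcases eq_or_ne y 1 with rfl | hy
    · rw [mul_one]
    · obtain ⟨t, rfl⟩ := WithOne.ne_one_iff_exists.mp hy
      rw [← WithOne.coe_mul, rhoBar_coe, rhoBar_coe]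
      exact rho_mul_le_left hρ s t

theorem rhoBar_mul_le_right {ρ : S → ℕ} {k : ℕ} (hρ : IsRankLabelling ρ)
    (hk : ∀ s : S, ρ s ≤ k) (x y : WithOne S) : rhoBar ρ k (x * y) ≤ rhoBar ρ k y := by
  rcases eq_or_ne y 1 with rfl | hy
  · rw [mul_one, rhoBar_one]; exact rhoBar_le_top hk x
  · obtain ⟨t, rfl⟩ := WithOne.ne_one_iff_exists.mp hy
    rcases eq_or_ne x 1 with rfl | hx
    · rw [one_mul]
    · obtain ⟨s, rfl⟩ := WithOne.ne_one_iff_exists.mp hx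
      rw [← WithOne.coe_mul, rhoBar_coe, rhoBar_coe]
      exact rho_mul_le_right hρ s t

instance instFiniteWithOne [Finite S] : Finite (WithOne S) := by
  have : Fintype S := Fintype.ofFinite S
  exact Finite.of_fintype (Option S)

/-- Left stability: if `ρ (a * s) = ρ s` then `s` is a left multiple of `a * s`. -/
theorem stab_left [Finite S] (hρ : IsRankLabelling ρ) (a s : S) (h : ρ s ≤ ρ (a * s)) :
    ∃ x : WithOne S, (↑s : WithOne S) = x * ↑(a * s) := by
  have hmem : s ∈ Jset (a * s) := (hρ s (a * s)).mp h (Or.inl (Or.inl (Or.inl rfl)))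
  rcases hmem with ((h1 | ⟨u, hu⟩) | ⟨u, hu⟩) | ⟨u, v, huv⟩
  · rw [Set.mem_singleton_iff] at h1
    exact ⟨1, by rw [one_mul, ← h1]⟩
  · exact ⟨↑u, by rw [← WithOne.coe_mul, ← hu]⟩
  · have hM : (↑s : WithOne S) = ↑a * ↑s * ↑u := by
      conv_lhs => rw [hu]
      simp only [WithOne.coe_mul]
    obtain ⟨⟨x, hx⟩, -⟩ := sandwich hM
    refine ⟨x, ?_⟩
    calc (↑s : WithOne S) = x * (↑a * ↑s) := hx
    _ = x * ↑(a * s) := by rw [WithOne.coe_mul]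
  · have hM : (↑s : WithOne S) = (↑u * ↑a) * ↑s * ↑v := by
      conv_lhs => rw [huv]
      simp only [WithOne.coe_mul, mul_assoc]
    obtain ⟨⟨x, hx⟩, -⟩ := sandwich hM
    refine ⟨x * ↑u, ?_⟩
    calc (↑s : WithOne S) = x * ((↑u * ↑a) * ↑s) := hx
    _ = (x * ↑u) * ↑(a * s) := by rw [WithOne.coe_mul]; simp only [mul_assoc]

/-- Right stability: if `ρ (t * b) = ρ t` then `t` is a right multiple of `t * b`. -/
theorem stab_right [Finite S] (hρ : IsRankLabelling ρ) (t b : S) (h : ρ t ≤ ρ (t * b)) :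
    ∃ y : WithOne S, (↑t : WithOne S) = ↑(t * b) * y := by
  have hmem : t ∈ Jset (t * b) := (hρ t (t * b)).mp h (Or.inl (Or.inl (Or.inl rfl)))
  rcases hmem with ((h1 | ⟨u, hu⟩) | ⟨u, hu⟩) | ⟨u, v, huv⟩
  · rw [Set.mem_singleton_iff] at h1
    exact ⟨1, by rw [mul_one, ← h1]⟩
  · have hM : (↑t : WithOne S) = ↑u * ↑t * ↑b := by
      conv_lhs => rw [hu]
      simp only [WithOne.coe_mul, mul_assoc]
    obtain ⟨-, ⟨y, hy⟩⟩ := sandwich hM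
    refine ⟨y, ?_⟩
    calc (↑t : WithOne S) = (↑t * ↑b) * y := hy
    _ = ↑(t * b) * y := by rw [WithOne.coe_mul]
  · exact ⟨↑u, by rw [← WithOne.coe_mul, ← hu]⟩
  · have hM : (↑t : WithOne S) = ↑u * ↑t * (↑b * ↑v) := by
      conv_lhs => rw [huv]
      simp only [WithOne.coe_mul, mul_assoc]
    obtain ⟨-, ⟨y, hy⟩⟩ := sandwich hM
    refine ⟨↑v * y, ?_⟩
    calc (↑t : WithOne S) = (↑t * (↑b * ↑v)) * y := hy
    _ = ↑(t * b) * (↑v * y) := by rw [WithOne.coe_mul]; simp only [mul_assoc]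

end Rank

/-! ### The invariant semigroup -/

@[ext]
structure TT (S : Type*) where
  val : S
  splits : Set (S × S)

section TTsec

variable {S : Type*} [Semigroup S]

instance : Mul (TT S) :=
  ⟨fun p q =>
    ⟨p.val * q.val,
      insert (p.val, q.val)
        (((fun z => (z.1, z.2 * q.val)) '' p.splits) ∪
          ((fun z => (p.val * z.1, z.2)) '' q.splits))⟩⟩

@[simp] theorem TT.mul_val (p q : TT S) : (p * q).val = p.val * q.val := rfl

@[simp] theorem TT.mul_splits (p q : TT S) :
    (p * q).splits =
      insert (p.val, q.val)
        (((fun z => (z.1, z.2 * q.val)) '' p.splits) ∪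
          ((fun z => (p.val * z.1, z.2)) '' q.splits)) := rfl

instance : Semigroup (TT S) where
  mul_assoc a b c := by
    ext : 1
    · simp [mul_assoc]
    · simp only [TT.mul_splits, TT.mul_val, Set.image_insert_eq, Set.image_union,
        Set.image_image]
      ext ⟨u, v⟩
      simp only [Set.mem_insert_iff, Set.mem_union, Set.mem_image, Prod.mk.injEq, mul_assoc]
      aesop

variable (ρ : S → ℕ) (i : ℕ)

def phi : FreeSemigroup {s : S // i ≤ ρ s} →ₙ* TT S :=
  FreeSemigroup.lift fun x => ⟨x.1, ∅⟩

@[simp] theorem phi_of (x : {s : S // i ≤ ρ s}) :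
    phi ρ i (FreeSemigroup.of x) = ⟨x.1, ∅⟩ := by
  simp [phi]

variable (β γ : S)

def Rb (m : WithOne S) : Prop :=
  (∃ p : WithOne S, m = ↑β * p) ∧ (∃ q : WithOne S, (↑β : WithOne S) = m * q)

def Lg (m : WithOne S) : Prop :=
  (∃ p : WithOne S, m = p * ↑γ) ∧ (∃ q : WithOne S, (↑γ : WithOne S) = q * m)

def condD (x y : S) (a b : WithOne S) : Prop :=
  Rb β (a * ↑x) ∧ Lg γ (↑y * b) ∧ (a * ↑x) * (↑y * b) = (↑β : WithOne S) * ↑γ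

def GoodD (c : Set (S × S)) (a b : WithOne S) : Prop :=
  ∃ p ∈ c, condD β γ p.1 p.2 a b

@[simp] theorem goodD_empty (a b : WithOne S) : GoodD β γ ∅ a b ↔ False := by
  simp [GoodD]

theorem goodD_insert (p : S × S) (c : Set (S × S)) (a b : WithOne S) :
    GoodD β γ (insert p c) a b ↔ condD β γ p.1 p.2 a b ∨ GoodD β γ c a b := by
  simp [GoodD, Set.mem_insert_iff, or_and_right, exists_or]

theorem goodD_union (c d : Set (S × S)) (a b : WithOne S) :
    GoodD β γ (c ∪ d) a b ↔ GoodD β γ c a b ∨ GoodD β γ d a b := by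
  simp [GoodD, Set.mem_union, or_and_right, exists_or]

theorem condD_mul_right (x y v : S) (a b : WithOne S) :
    condD β γ x (y * v) a b ↔ condD β γ x y a (↑v * b) := by
  unfold condD
  rw [WithOne.coe_mul, mul_assoc]

theorem condD_mul_left (x y u : S) (a b : WithOne S) :
    condD β γ (u * x) y a b ↔ condD β γ x y (a * ↑u) b := by
  unfold condD
  rw [WithOne.coe_mul, ← mul_assoc]

theorem goodD_image_r (c : Set (S × S)) (v : S) (a b : WithOne S) :
    GoodD β γ ((fun z => (z.1, z.2 * v)) '' c) a b ↔ GoodD β γ c a (↑v * b) := by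
  unfold GoodD
  rw [Set.exists_mem_image]
  exact exists_congr fun z => and_congr_right fun _ => condD_mul_right β γ z.1 z.2 v a b

theorem goodD_image_l (c : Set (S × S)) (u : S) (a b : WithOne S) :
    GoodD β γ ((fun z => (u * z.1, z.2)) '' c) a b ↔ GoodD β γ c (a * ↑u) b := by
  unfold GoodD
  rw [Set.exists_mem_image]
  exact exists_congr fun z => and_congr_right fun _ => condD_mul_left β γ z.1 z.2 u a b

theorem goodD_mul (p q : TT S) (a b : WithOne S) :
    GoodD β γ (p * q).splits a b ↔
      condD β γ p.val q.val a b ∨ GoodD β γ p.splits a (↑q.val * b) ∨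
        GoodD β γ q.splits (a * ↑p.val) b := by
  rw [TT.mul_splits, goodD_insert, goodD_union, goodD_image_r, goodD_image_l]

/-- The separating congruence. -/
def ECon : Con (FreeSemigroup {s : S // i ≤ ρ s}) where
  r u v := (phi ρ i u).val = (phi ρ i v).val ∧
    ∀ a b : WithOne S, (GoodD β γ (phi ρ i u).splits a b ↔ GoodD β γ (phi ρ i v).splits a b)
  iseqv :=
    ⟨fun _ => ⟨rfl, fun _ _ => Iff.rfl⟩,
     fun h => ⟨h.1.symm, fun a b => (h.2 a b).symm⟩,
     fun h h' => ⟨h.1.trans h'.1, fun a b => (h.2 a b).trans (h'.2 a b)⟩⟩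
  mul' := by
    intro w x y z h h'
    refine ⟨?_, ?_⟩
    · simp only [map_mul, TT.mul_val, h.1, h'.1]
    · intro a b
      simp only [map_mul, goodD_mul, h.1, h'.1]
      exact or_congr Iff.rfl (or_congr (h.2 _ _) (h'.2 _ _))

end TTsec

/-! ### The key refutation -/

section Main

variable {S : Type*} [Semigroup S] [Finite S] {ρ : S → ℕ} {k r : ℕ} {β γ : S}

theorem cond_false (hρ : IsRankLabelling ρ) (hk : ∀ s : S, ρ s ≤ k)
    (hβ : ρ β = k) (hγ : ρ γ = k) (hβγ : ρ (β * γ) = r)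
    {s t : S} (hst : r + 1 ≤ ρ (s * t)) (a b : WithOne S) :
    ¬ condD β γ s t a b := by
  rintro ⟨⟨⟨p, hp⟩, ⟨q, hq⟩⟩, ⟨⟨p', hp'⟩, ⟨q', hq'⟩⟩, he⟩
  have hx : ∃ x : WithOne S, (↑s : WithOne S) = x * (a * ↑s) := by
    rcases eq_or_ne a 1 with rfl | ha
    · exact ⟨1, by rw [one_mul, one_mul]⟩
    · obtain ⟨a₀, rfl⟩ := WithOne.ne_one_iff_exists.mp ha
      have h1 : ρ β ≤ ρ (a₀ * s) := by
        calc ρ β = rhoBar ρ k ((↑a₀ * ↑s) * q) := by rw [← hq, rhoBar_coe]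
        _ ≤ rhoBar ρ k (↑a₀ * ↑s) := rhoBar_mul_le_left hρ hk _ _
        _ = ρ (a₀ * s) := by rw [← WithOne.coe_mul, rhoBar_coe]
      have h2 : ρ s ≤ ρ (a₀ * s) := by have := hk s; omega
      obtain ⟨x, hx⟩ := stab_left hρ a₀ s h2
      refine ⟨x, ?_⟩
      calc (↑s : WithOne S) = x * ↑(a₀ * s) := hx
      _ = x * (↑a₀ * ↑s) := by rw [WithOne.coe_mul]
  have hy : ∃ y : WithOne S, (↑t : WithOne S) = (↑t * b) * y := by
    rcases eq_or_ne b 1 with rfl | hb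
    · exact ⟨1, by rw [mul_one, mul_one]⟩
    · obtain ⟨b₀, rfl⟩ := WithOne.ne_one_iff_exists.mp hb
      have h1 : ρ γ ≤ ρ (t * b₀) := by
        calc ρ γ = rhoBar ρ k (q' * (↑t * ↑b₀)) := by rw [← hq', rhoBar_coe]
        _ ≤ rhoBar ρ k (↑t * ↑b₀) := rhoBar_mul_le_right hρ hk _ _
        _ = ρ (t * b₀) := by rw [← WithOne.coe_mul, rhoBar_coe]
      have h2 : ρ t ≤ ρ (t * b₀) := by have := hk t; omega
      obtain ⟨y, hy⟩ := stab_right hρ t b₀ h2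
      refine ⟨y, ?_⟩
      calc (↑t : WithOne S) = ↑(t * b₀) * y := hy
      _ = (↑t * ↑b₀) * y := by rw [WithOne.coe_mul]
  obtain ⟨x, hx⟩ := hx
  obtain ⟨y, hy⟩ := hy
  have hkey : (↑(s * t) : WithOne S) = x * (((↑β : WithOne S) * ↑γ) * y) := by
    rw [WithOne.coe_mul, ← he]
    conv_lhs => rw [hx, hy]
    simp only [mul_assoc]
  have hle : ρ (s * t) ≤ r := by
    calc ρ (s * t) = rhoBar ρ k (↑(s * t)) := (rhoBar_coe ρ k _).symm
    _ = rhoBar ρ k (x * (((↑β : WithOne S) * ↑γ) * y)) := by rw [hkey]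
    _ ≤ rhoBar ρ k (((↑β : WithOne S) * ↑γ) * y) := rhoBar_mul_le_right hρ hk _ _
    _ ≤ rhoBar ρ k ((↑β : WithOne S) * ↑γ) := rhoBar_mul_le_left hρ hk _ _
    _ = ρ (β * γ) := by rw [← WithOne.coe_mul, rhoBar_coe]
    _ = r := hβγ
  omega

theorem rel_le_ECon (hρ : IsRankLabelling ρ) (hk : ∀ s : S, ρ s ≤ k)
    (hβ : ρ β = k) (hγ : ρ γ = k) (hβγ : ρ (β * γ) = r) :
    ∀ u v, rankCayleyRel ρ (r + 1) u v → ECon ρ (r + 1) β γ u v := by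
  rintro u v ⟨s, t, hs, ht, hst, rfl, rfl⟩
  constructor
  · simp [map_mul]
  · intro a b
    have hf := cond_false (k := k) hρ hk hβ hγ hβγ hst a b
    simp only [map_mul, goodD_mul, phi_of, goodD_empty, or_false, false_or]
    tauto
end Main

end Stmt3Aux

open Stmt3Aux

/-- If `α, β, γ` have maximal rank `k`, `ρ(αβ) = ρ(βγ) = r < k` and `αβγ = βγ`,
then `x_α x_β x_γ = x_β x_γ` is not a consequence of the relations of rank `≥ r + 1`. -/
theorem stmt_3 {S : Type*} [Semigroup S] [Finite S]
    (ρ : S → ℕ) (hρ : IsRankLabelling ρ) (k : ℕ) (hk : ∀ s : S, ρ s ≤ k)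
    (α β γ : S) (r : ℕ) (hα : ρ α = k) (hβ : ρ β = k) (hγ : ρ γ = k)
    (hαβ : ρ (α * β) = r) (hrk : r < k)
    (habc : α * β * γ = β * γ) (hβγ : ρ (β * γ) = r) :
    ¬ conGen (rankCayleyRel ρ (r + 1))
      (FreeSemigroup.of ⟨α, by omega⟩ * FreeSemigroup.of ⟨β, by omega⟩ *
        FreeSemigroup.of ⟨γ, by omega⟩)
      (FreeSemigroup.of ⟨β, by omega⟩ * FreeSemigroup.of ⟨γ, by omega⟩) := by
  intro h
  have hle : conGen (rankCayleyRel ρ (r + 1)) ≤ ECon ρ (r + 1) β γ :=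
    Con.conGen_le.mpr (rel_le_ECon hρ hk hβ hγ hβγ)
  have hE := Con.le_def.mp hle h
  have hgood := hE.2 1 1
  -- the right-hand side satisfies the invariant
  have h2 : GoodD β γ
      (phi ρ (r + 1) (FreeSemigroup.of ⟨β, by omega⟩ * FreeSemigroup.of ⟨γ, by omega⟩)).splits
      1 1 := by
    rw [map_mul, goodD_mul]
    refine Or.inl ?_
    simp only [phi_of]
    refine ⟨⟨⟨1, by rw [one_mul, mul_one]⟩, ⟨1, by rw [one_mul, mul_one]⟩⟩,
      ⟨⟨1, by rw [mul_one, one_mul]⟩, ⟨1, by rw [mul_one, one_mul]⟩⟩, ?_⟩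
    rw [one_mul, mul_one]
  -- the left-hand side does not
  have h1 : ¬ GoodD β γ
      (phi ρ (r + 1) (FreeSemigroup.of ⟨α, by omega⟩ * FreeSemigroup.of ⟨β, by omega⟩ *
        FreeSemigroup.of ⟨γ, by omega⟩)).splits 1 1 := by
    rw [map_mul, goodD_mul]
    simp only [map_mul, goodD_mul, phi_of, TT.mul_val, goodD_empty, or_false, false_or]
    rintro (hc | hc)
    · -- split (αβ | γ) : then β would be R-below an element of rank r
      obtain ⟨⟨-, ⟨q, hq⟩⟩, -, -⟩ := hc
      rw [one_mul] at hq
      have : ρ β ≤ r := by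
        calc ρ β = rhoBar ρ k ((↑(α * β) : WithOne S) * q) := by rw [← hq, rhoBar_coe]
        _ ≤ rhoBar ρ k (↑(α * β)) := rhoBar_mul_le_left hρ hk _ _
        _ = ρ (α * β) := rhoBar_coe ρ k _
        _ = r := hαβ
      omega
    · -- split (α | βγ) : then γ would be L-below an element of rank r
      obtain ⟨-, ⟨-, ⟨q', hq'⟩⟩, -⟩ := hc
      rw [mul_one] at hq'
      have : ρ γ ≤ r := by
        calc ρ γ = rhoBar ρ k (q' * ((↑β : WithOne S) * ↑γ)) := by rw [← hq', rhoBar_coe]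
        _ ≤ rhoBar ρ k ((↑β : WithOne S) * ↑γ) := rhoBar_mul_le_right hρ hk _ _
        _ = ρ (β * γ) := by rw [← WithOne.coe_mul, rhoBar_coe]
        _ = r := hβγ
      omega
  exact h1 (hgood.mpr h2)
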